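/- arXiv:2005.06154 — 5 statements merged into one kernel-verified Lean document; each statement's English description precedes it below -/
import Mathlib

section
/- (Combinatorial core of Theorem 2, 'Preserve partitioned data security', full uniformity form.) Suppose n = k^2. Then for every a b : Fin n, n times the number of admissible permutations σ : Equiv.Perm (Fin n) satisfying σ a = b equals the total number of admissible permutations. In other words, conditioned on the adversarial view of one QB query (the admissibility constraint), the value σ a is uniformly distributed over Fin n, so the adversary's posterior probability that encrypted value a is associated with cleartext value b equals the prior probability 1/n. -/
set_option maxHeartbeats 2000000
open Finset Equiv

section Panda
variable {α : Type*} [Fintype α] [DecidableEq α]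

lemma natCard_eq {β : Type*} [Fintype β] (p : β → Prop) [DecidablePred p] :
    Nat.card {x // p x} = (univ.filter p).card := by
  rw [Nat.card_eq_fintype_card, Fintype.card_subtype]

lemma stab_card (S : Finset α) :
    (univ.filter fun π : Equiv.Perm α => ∀ x ∈ S, π x = x).card
      = Nat.factorial (Fintype.card α - S.card) := by
  classical
  have e : Equiv.Perm {x : α // x ∉ S} ≃ {σ : Equiv.Perm α // ∀ x ∈ S, σ x = x} :=
    (Equiv.Perm.subtypeEquivSubtypePerm (fun x => x ∉ S)).trans
      (Equiv.subtypeEquivRight (fun σ => by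
        constructor
        · intro h x hx; exact h x (not_not_intro hx)
        · intro h x hx; exact h x (not_not.mp hx)))
  have h1 : Fintype.card {σ : Equiv.Perm α // ∀ x ∈ S, σ x = x}
      = (univ.filter fun π : Equiv.Perm α => ∀ x ∈ S, π x = x).card :=
    Fintype.card_subtype _
  rw [← h1, ← Fintype.card_congr e, Fintype.card_perm]
  congr 1
  rw [Fintype.card_subtype_compl, Fintype.card_coe]

lemma coset_card (S : Finset α) (σ₀ : Equiv.Perm α) :
    (univ.filter fun σ : Equiv.Perm α => ∀ x ∈ S, σ x = σ₀ x).card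
      = Nat.factorial (Fintype.card α - S.card) := by
  classical
  rw [← stab_card S]
  apply Finset.card_bij' (fun σ _ => σ₀⁻¹ * σ) (fun π _ => σ₀ * π)
  · intro σ hσ
    simp only [mem_filter, mem_univ, true_and] at hσ ⊢
    intro x hx
    simp [Equiv.Perm.mul_apply, hσ x hx]
  · intro π hπ
    simp only [mem_filter, mem_univ, true_and] at hπ ⊢
    intro x hx
    simp [Equiv.Perm.mul_apply, hπ x hx]
  · intro σ _; simp [mul_assoc]
  · intro π _; simp [mul_assoc]

lemma exists_perm_extend (S : Finset α) (f : α → α) (hf : Set.InjOn f S) :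
    ∃ σ₀ : Equiv.Perm α, ∀ x ∈ S, σ₀ x = f x := by
  classical
  have hcard : (S.image f).card = S.card := Finset.card_image_of_injOn hf
  have hbij : Function.Bijective (fun x : {x : α // x ∈ S} =>
      (⟨f x, Finset.mem_image_of_mem f x.2⟩ : {y : α // y ∈ S.image f})) := by
    constructor
    · intro x y hxy
      exact Subtype.ext (hf x.2 y.2 (by simpa using congrArg Subtype.val hxy))
    · rintro ⟨y, hy⟩
      obtain ⟨x, hx, rfl⟩ := Finset.mem_image.mp hy
      exact ⟨⟨x, hx⟩, rfl⟩
  let e1 : {x : α // x ∈ S} ≃ {y : α // y ∈ S.image f} := Equiv.ofBijective _ hbij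
  have e2 : {x : α // x ∉ S} ≃ {y : α // y ∉ S.image f} := by
    apply Fintype.equivOfCardEq
    rw [Fintype.card_subtype_compl, Fintype.card_subtype_compl]
    congr 1
    rw [Fintype.card_coe, Fintype.card_coe, hcard]
  let σ : Equiv.Perm α :=
    ((Equiv.sumCompl (· ∈ S)).symm.trans ((e1.sumCongr e2).trans (Equiv.sumCompl (· ∈ S.image f))))
  refine ⟨σ, fun x hx => ?_⟩
  have h2 : (Equiv.sumCompl (· ∈ S)).symm x = Sum.inl ⟨x, hx⟩ :=
    Equiv.sumCompl_symm_apply_of_pos (p := (· ∈ S)) hx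
  simp only [σ, Equiv.trans_apply, h2, Equiv.sumCongr_apply, Sum.map_inl,
    Equiv.sumCompl_apply_inl, e1, Equiv.ofBijective_apply]

lemma perm_count (S : Finset α) (Q : (α → α) → Prop)
    (hQ : ∀ f g : α → α, (∀ x ∈ S, f x = g x) → Q f → Q g) :
    Nat.card {σ : Equiv.Perm α // Q ⇑σ}
      = Nat.card {f : α → α // (∀ x ∉ S, f x = x) ∧ Set.InjOn f S ∧ Q f}
        * Nat.factorial (Fintype.card α - S.card) := by
  classical
  rw [natCard_eq, natCard_eq]
  set t : Finset (α → α) := univ.filter fun f : α → α =>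
      (∀ x ∉ S, f x = x) ∧ Set.InjOn f S ∧ Q f with ht
  have key := Finset.card_eq_sum_card_fiberwise
    (s := univ.filter fun σ : Equiv.Perm α => Q ⇑σ) (t := t)
    (f := fun σ => fun x => if x ∈ S then σ x else x) ?_
  · rw [key]
    rw [Finset.sum_congr rfl (g := fun _ => Nat.factorial (Fintype.card α - S.card)) ?_]
    · rw [Finset.sum_const, smul_eq_mul]
    · intro f hf
      rw [ht, mem_filter] at hf
      obtain ⟨-, hsupp, hinj, hQf⟩ := hf
      obtain ⟨σ₀, hσ₀⟩ := exists_perm_extend S f hinj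
      have : (univ.filter fun σ : Equiv.Perm α => Q ⇑σ).filter
          (fun σ => (fun x => if x ∈ S then σ x else x) = f)
          = univ.filter fun σ : Equiv.Perm α => ∀ x ∈ S, σ x = σ₀ x := by
        ext σ
        simp only [mem_filter, mem_univ, true_and]
        constructor
        · rintro ⟨hQσ, hres⟩ x hx
          have := congrFun hres x
          rw [if_pos hx] at this
          rw [this, hσ₀ x hx]
        · intro h
          have hag : ∀ x ∈ S, σ x = f x := fun x hx => by rw [h x hx, hσ₀ x hx]
          constructor
          · exact hQ f (⇑σ) (fun x hx => (hag x hx).symm) hQf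
          · funext x
            by_cases hx : x ∈ S
            · rw [if_pos hx, hag x hx]
            · rw [if_neg hx, hsupp x hx]
      rw [this, coset_card]
  · intro σ hσ
    rw [Finset.mem_coe, mem_filter] at hσ
    rw [Finset.mem_coe, ht, mem_filter]
    refine ⟨mem_univ _, fun x hx => if_neg hx, ?_, ?_⟩
    · intro x hx y hy hxy
      simp only [Finset.mem_coe] at hx hy
      simp only [if_pos hx, if_pos hy] at hxy
      exact σ.injective hxy
    · exact hQ (⇑σ) _ (fun x hx => (if_pos hx).symm) hσ.2

lemma peel_countN (R : Finset α) (a : α) (ha : a ∉ R) (c : α) (Q : (α → α) → Prop)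
    (hQloc : ∀ f g : α → α, (∀ x ∈ R, f x = g x) → Q f → Q g)
    (hQc : ∀ g : α → α, (∀ x ∉ R, g x = x) → Q g → ∀ x ∈ R, g x ≠ c) :
    Nat.card {f : α → α //
        (∀ x ∉ insert a R, f x = x) ∧ Set.InjOn f ↑(insert a R) ∧ f a = c ∧ Q f}
      = Nat.card {g : α → α // (∀ x ∉ R, g x = x) ∧ Set.InjOn g ↑R ∧ Q g} := by
  classical
  rw [natCard_eq, natCard_eq]
  apply Finset.card_bij' (fun f _ => fun z => if z = a then z else f z)
    (fun g _ => fun z => if z = a then c else g z)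
  · intro f hf
    rw [mem_filter] at hf
    obtain ⟨-, hsupp, hinj, hfa, hQf⟩ := hf
    have hag : ∀ x ∈ R, (fun z => if z = a then z else f z) x = f x := by
      intro x hx
      have : x ≠ a := fun h => ha (h ▸ hx)
      simp [this]
    rw [mem_filter]
    refine ⟨mem_univ _, ?_, ?_, ?_⟩
    · intro z hz
      by_cases hza : z = a
      · simp [hza]
      · simp only [if_neg hza]
        exact hsupp z (by simp [hza, hz])
    · intro x hx y hy hxy
      simp only [Finset.mem_coe] at hx hy
      rw [hag x hx, hag y hy] at hxy
      exact hinj (Finset.mem_coe.mpr (mem_insert_of_mem hx))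
        (Finset.mem_coe.mpr (mem_insert_of_mem hy)) hxy
    · exact hQloc f _ (fun x hx => (hag x hx).symm) hQf
  · intro g hg
    rw [mem_filter] at hg
    obtain ⟨-, hsupp, hinj, hQg⟩ := hg
    have hag : ∀ x ∈ R, (fun z => if z = a then c else g z) x = g x := by
      intro x hx
      have : x ≠ a := fun h => ha (h ▸ hx)
      simp [this]
    have hQ' : Q (fun z => if z = a then c else g z) :=
      hQloc g _ (fun x hx => (hag x hx).symm) hQg
    rw [mem_filter]
    refine ⟨mem_univ _, ?_, ?_, by simp, hQ'⟩
    · intro z hz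
      simp only [mem_insert, not_or] at hz
      simp [hz.1, hsupp z hz.2]
    · intro x hx y hy hxy
      simp only [Finset.mem_coe, Finset.coe_insert, Set.mem_insert_iff] at hx hy
      rcases hx with rfl | hx <;> rcases hy with rfl | hy
      · rfl
      · exfalso
        rw [hag y hy] at hxy
        simp only [if_pos rfl] at hxy
        exact hQc g hsupp hQg y hy hxy.symm
      · exfalso
        rw [hag x hx] at hxy
        simp only [if_pos rfl] at hxy
        exact hQc g hsupp hQg x hx hxy
      · rw [hag x hx, hag y hy] at hxy
        exact hinj hx hy hxy
  · intro f hf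
    rw [mem_filter] at hf
    funext z
    by_cases hz : z = a
    · simp [hz, hf.2.2.2.1.symm]
    · simp [hz]
  · intro g hg
    rw [mem_filter] at hg
    funext z
    by_cases hz : z = a
    · simp only [if_pos hz]
      rw [hz]
      exact (hg.2.1 a ha).symm
    · simp [hz]

lemma inj_countN (R : Finset α) (T : Finset α) :
    Nat.card {g : α → α //
        (∀ x ∉ R, g x = x) ∧ Set.InjOn g ↑R ∧ ∀ x ∈ R, g x ∈ T}
      = T.card.descFactorial R.card := by
  classical
  induction R using Finset.induction_on generalizing T with
  | empty =>
    rw [natCard_eq]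
    have h0 : (univ.filter fun g : α → α =>
        (∀ x ∉ (∅ : Finset α), g x = x) ∧ Set.InjOn g ↑(∅ : Finset α) ∧
          ∀ x ∈ (∅ : Finset α), g x ∈ T) = {id} := by
      ext g
      simp only [mem_filter, mem_univ, true_and, Finset.notMem_empty, mem_singleton]
      constructor
      · rintro ⟨h, -, -⟩
        funext z
        exact h z (by simp)
      · rintro rfl
        refine ⟨fun _ _ => rfl, by simp [Set.InjOn], by simp⟩
    rw [h0]
    simp
  | @insert x R' hx ih =>
    rw [natCard_eq]
    have key := Finset.card_eq_sum_card_fiberwise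
      (s := univ.filter fun g : α → α =>
        (∀ z ∉ insert x R', g z = z) ∧ Set.InjOn g ↑(insert x R') ∧
          ∀ z ∈ insert x R', g z ∈ T)
      (t := T) (f := fun g => g x) ?_
    · rw [key]
      have hterm : ∀ y ∈ T,
          ((univ.filter fun g : α → α =>
            (∀ z ∉ insert x R', g z = z) ∧ Set.InjOn g ↑(insert x R') ∧
              ∀ z ∈ insert x R', g z ∈ T).filter fun g => g x = y).card
          = (T.card - 1).descFactorial R'.card := by
        intro y hy
        rw [Finset.filter_filter]
        have heq : (univ.filter fun g : α → α =>
            ((∀ z ∉ insert x R', g z = z) ∧ Set.InjOn g ↑(insert x R') ∧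
              ∀ z ∈ insert x R', g z ∈ T) ∧ g x = y)
            = univ.filter fun g : α → α =>
              (∀ z ∉ insert x R', g z = z) ∧ Set.InjOn g ↑(insert x R') ∧ g x = y ∧
                ∀ z ∈ R', g z ∈ T.erase y := by
          ext g
          simp only [mem_filter, mem_univ, true_and]
          constructor
          · rintro ⟨⟨hsupp, hinj, hT⟩, hgx⟩
            refine ⟨hsupp, hinj, hgx, fun z hz => ?_⟩
            rw [Finset.mem_erase]
            refine ⟨?_, hT z (mem_insert_of_mem hz)⟩
            intro hgz
            have : z = x := hinj (by simp [hz]) (by simp) (by rw [hgz, hgx])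
            exact hx (this ▸ hz)
          · rintro ⟨hsupp, hinj, hgx, hT⟩
            refine ⟨⟨hsupp, hinj, fun z hz => ?_⟩, hgx⟩
            rcases mem_insert.mp hz with rfl | hz
            · rw [hgx]; exact hy
            · exact Finset.mem_of_mem_erase (hT z hz)
        rw [heq, ← natCard_eq]
        refine (peel_countN R' x hx y
          (fun g => ∀ z ∈ R', g z ∈ T.erase y)
          (fun f g hag hf z hz => by rw [← hag z hz]; exact hf z hz)
          (fun g _ hQ z hz h => by
            have := hQ z hz
            rw [h] at this
            exact (Finset.notMem_erase y T) this)).trans ?_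
        exact (ih (T.erase y)).trans (by rw [Finset.card_erase_of_mem hy])
      rw [Finset.sum_congr rfl hterm, Finset.sum_const, smul_eq_mul,
        Finset.card_insert_of_notMem hx]
      rcases Nat.eq_zero_or_pos T.card with h0 | hpos
      · rw [h0]
        simp
      · obtain ⟨m, hm⟩ : ∃ m, T.card = m + 1 := ⟨T.card - 1, (Nat.succ_pred_eq_of_pos hpos).symm⟩
        rw [hm, Nat.succ_descFactorial_succ, Nat.add_sub_cancel]
    · intro g hg
      rw [Finset.mem_coe, mem_filter] at hg
      exact hg.2.2.2 x (mem_insert_self x R')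

lemma one_pointN (S R : Finset α) (a b : α) (T : Finset α)
    (hS : S = insert a R) (ha : a ∉ R) (hbT : b ∉ T) :
    Nat.card {f : α → α //
        (∀ z ∉ S, f z = z) ∧ Set.InjOn f ↑S ∧ f a = b ∧ ∀ z ∈ R, f z ∈ T}
      = T.card.descFactorial R.card := by
  subst hS
  refine (peel_countN R a ha b (fun f => ∀ z ∈ R, f z ∈ T)
    (fun f g hag hf z hz => by rw [← hag z hz]; exact hf z hz)
    (fun g _ hQ z hz h => hbT (h ▸ hQ z hz))).trans ?_
  exact inj_countN R T

lemma two_pointN (S R : Finset α) (a x b y : α) (T : Finset α)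
    (hS : S = insert a R) (ha : a ∉ R) (hx : x ∈ R) (hby : b ≠ y)
    (hbT : b ∉ T) (hyT : y ∉ T) :
    Nat.card {f : α → α //
        (∀ z ∉ S, f z = z) ∧ Set.InjOn f ↑S ∧ f a = b ∧
          f x = y ∧ ∀ z ∈ R.erase x, f z ∈ T}
      = T.card.descFactorial (R.erase x).card := by
  subst hS
  refine (peel_countN R a ha b (fun f => f x = y ∧ ∀ z ∈ R.erase x, f z ∈ T)
    (fun f g hag hf => by
      refine ⟨by rw [← hag x hx]; exact hf.1, fun z hz => ?_⟩
      rw [← hag z (Finset.mem_of_mem_erase hz)]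
      exact hf.2 z hz)
    (fun g _ hQ z hz h => by
      by_cases hzx : z = x
      · exact hby (by rw [← h, hzx, hQ.1])
      · exact hbT (h ▸ hQ.2 z (Finset.mem_erase.mpr ⟨hzx, hz⟩)))).trans ?_
  have h2 := peel_countN (R.erase x) x (Finset.notMem_erase x R) y
    (fun f => ∀ z ∈ R.erase x, f z ∈ T)
    (fun f g hag hf z hz => by rw [← hag z hz]; exact hf z hz)
    (fun g _ hQ z hz h => hyT (h ▸ hQ z hz))
  rw [Finset.insert_erase hx] at h2
  exact h2.trans (inj_countN (R.erase x) T)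

lemma insert_eq_insert_erase' (A : Finset α) (a : α) :
    insert a A = insert a (A.erase a) := by
  ext z
  simp only [Finset.mem_insert, Finset.mem_erase]
  constructor
  · rintro (rfl | hz)
    · exact Or.inl rfl
    · by_cases hza : z = a
      · exact Or.inl hza
      · exact Or.inr ⟨hza, hz⟩
  · rintro (rfl | ⟨-, hz⟩)
    · exact Or.inl rfl
    · exact Or.inr hz

-- case a ∈ A, b ∈ B
lemma scenario_in_in (A B : Finset α) (a b : α) (ha : a ∈ A) (hb : b ∈ B) :
    Nat.card {f : α → α // (∀ x ∉ insert a A, f x = x) ∧ Set.InjOn f ↑(insert a A) ∧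
        (A.filter fun x => f x ∈ B).card = 1 ∧ f a = b}
      = (univ \ B).card.descFactorial (A.erase a).card := by
  classical
  rw [natCard_eq]
  have heq : (univ.filter fun f : α → α => (∀ x ∉ insert a A, f x = x) ∧
      Set.InjOn f ↑(insert a A) ∧ (A.filter fun x => f x ∈ B).card = 1 ∧ f a = b)
      = univ.filter fun f : α → α => (∀ x ∉ insert a A, f x = x) ∧
        Set.InjOn f ↑(insert a A) ∧ f a = b ∧ ∀ z ∈ A.erase a, f z ∈ univ \ B := by
    ext f
    simp only [mem_filter, mem_univ, true_and]
    constructor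
    · rintro ⟨hsupp, hinj, hcard, hfa⟩
      refine ⟨hsupp, hinj, hfa, fun z hz => ?_⟩
      obtain ⟨x₀, hx₀⟩ := Finset.card_eq_one.mp hcard
      have hax : a ∈ A.filter fun x => f x ∈ B := by
        rw [Finset.mem_filter]; exact ⟨ha, by rw [hfa]; exact hb⟩
      rw [hx₀, Finset.mem_singleton] at hax
      rw [Finset.mem_sdiff]
      refine ⟨Finset.mem_univ _, fun hzB => ?_⟩
      have hz' : z ∈ A.filter fun x => f x ∈ B :=
        Finset.mem_filter.mpr ⟨Finset.mem_of_mem_erase hz, hzB⟩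
      rw [hx₀, Finset.mem_singleton] at hz'
      exact (Finset.mem_erase.mp hz).1 (hz'.trans hax.symm)
    · rintro ⟨hsupp, hinj, hfa, hT⟩
      refine ⟨hsupp, hinj, ?_, hfa⟩
      have hfs : (A.filter fun x => f x ∈ B) = {a} := by
        ext z
        rw [Finset.mem_filter, Finset.mem_singleton]
        constructor
        · rintro ⟨hzA, hzB⟩
          by_contra hza
          have := hT z (Finset.mem_erase.mpr ⟨hza, hzA⟩)
          rw [Finset.mem_sdiff] at this
          exact this.2 hzB
        · rintro rfl
          exact ⟨ha, by rw [hfa]; exact hb⟩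
      rw [hfs, Finset.card_singleton]
  rw [heq, ← natCard_eq]
  exact one_pointN (insert a A) (A.erase a) a b (univ \ B)
    (insert_eq_insert_erase' A a) (Finset.notMem_erase a A) (by simp [hb])

-- case b ∉ B (any a)
lemma scenario_out (A B : Finset α) (a b : α) (hb : b ∉ B) :
    Nat.card {f : α → α // (∀ x ∉ insert a A, f x = x) ∧ Set.InjOn f ↑(insert a A) ∧
        (A.filter fun x => f x ∈ B).card = 1 ∧ f a = b}
      = (A.erase a).card *
          (B.card * (((univ \ B).erase b).card.descFactorial ((A.erase a).card - 1))) := by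
  classical
  rw [natCard_eq]
  have haA : a ∉ (A.erase a : Set α) := by simp
  have hsplit : (univ.filter fun f : α → α => (∀ x ∉ insert a A, f x = x) ∧
      Set.InjOn f ↑(insert a A) ∧ (A.filter fun x => f x ∈ B).card = 1 ∧ f a = b)
      = (A.erase a).biUnion (fun x => univ.filter fun f : α → α =>
          (∀ z ∉ insert a A, f z = z) ∧ Set.InjOn f ↑(insert a A) ∧ f a = b ∧
            f x ∈ B ∧ ∀ z ∈ (A.erase a).erase x, f z ∈ (univ \ B).erase b) := by
    ext f
    simp only [mem_biUnion, mem_filter, mem_univ, true_and]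
    constructor
    · rintro ⟨hsupp, hinj, hcard, hfa⟩
      obtain ⟨x₀, hx₀⟩ := Finset.card_eq_one.mp hcard
      have hx₀m : x₀ ∈ A.filter fun x => f x ∈ B := by
        rw [hx₀]; exact Finset.mem_singleton_self x₀
      rw [Finset.mem_filter] at hx₀m
      have hx₀a : x₀ ≠ a := by
        rintro rfl
        rw [hfa] at hx₀m
        exact hb hx₀m.2
      refine ⟨x₀, Finset.mem_erase.mpr ⟨hx₀a, hx₀m.1⟩, hsupp, hinj, hfa, hx₀m.2,
        fun z hz => ?_⟩
      obtain ⟨hzx, hz2⟩ := Finset.mem_erase.mp hz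
      obtain ⟨hza, hzA⟩ := Finset.mem_erase.mp hz2
      rw [Finset.mem_erase, Finset.mem_sdiff]
      refine ⟨?_, Finset.mem_univ _, fun hzB => ?_⟩
      · intro hfzb
        apply hza
        refine hinj (Finset.mem_coe.mpr (mem_insert_of_mem hzA))
          (Finset.mem_coe.mpr (mem_insert_self a A)) ?_
        rw [hfzb, hfa]
      · have : z ∈ A.filter fun x => f x ∈ B := Finset.mem_filter.mpr ⟨hzA, hzB⟩
        rw [hx₀, Finset.mem_singleton] at this
        exact hzx this
    · rintro ⟨x, hxm, hsupp, hinj, hfa, hfxB, hz⟩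
      refine ⟨hsupp, hinj, ?_, hfa⟩
      have hfs : (A.filter fun z => f z ∈ B) = {x} := by
        ext z
        rw [Finset.mem_filter, Finset.mem_singleton]
        constructor
        · rintro ⟨hzA, hzB⟩
          by_contra hzx
          have hza : z ≠ a := by
            rintro rfl
            rw [hfa] at hzB
            exact hb hzB
          have := hz z (Finset.mem_erase.mpr ⟨hzx, Finset.mem_erase.mpr ⟨hza, hzA⟩⟩)
          rw [Finset.mem_erase, Finset.mem_sdiff] at this
          exact this.2.2 hzB
        · rintro rfl
          exact ⟨Finset.mem_of_mem_erase hxm, hfxB⟩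
      rw [hfs, Finset.card_singleton]
  rw [hsplit, Finset.card_biUnion ?disj]
  case disj =>
    intro x hxm x' hx'm hne
    simp only [Function.onFun]
    rw [Finset.disjoint_left]
    intro f hf hf'
    rw [mem_filter] at hf hf'
    have h1 : f x ∈ B := hf.2.2.2.2.1
    have h2 := hf'.2.2.2.2.2 x (Finset.mem_erase.mpr ⟨hne, hxm⟩)
    rw [Finset.mem_erase, Finset.mem_sdiff] at h2
    exact h2.2.2 h1
  have hterm : ∀ x ∈ A.erase a,
      (univ.filter fun f : α → α =>
        (∀ z ∉ insert a A, f z = z) ∧ Set.InjOn f ↑(insert a A) ∧ f a = b ∧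
          f x ∈ B ∧ ∀ z ∈ (A.erase a).erase x, f z ∈ (univ \ B).erase b).card
      = B.card * (((univ \ B).erase b).card.descFactorial ((A.erase a).card - 1)) := by
    intro x hxm
    have key := Finset.card_eq_sum_card_fiberwise
      (s := univ.filter fun f : α → α =>
        (∀ z ∉ insert a A, f z = z) ∧ Set.InjOn f ↑(insert a A) ∧ f a = b ∧
          f x ∈ B ∧ ∀ z ∈ (A.erase a).erase x, f z ∈ (univ \ B).erase b)
      (t := B) (f := fun f => f x) (fun f hf => (mem_filter.mp hf).2.2.2.2.1)
    rw [key]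
    have hyterm : ∀ y ∈ B,
        ((univ.filter fun f : α → α =>
          (∀ z ∉ insert a A, f z = z) ∧ Set.InjOn f ↑(insert a A) ∧ f a = b ∧
            f x ∈ B ∧ ∀ z ∈ (A.erase a).erase x, f z ∈ (univ \ B).erase b).filter
          fun f => f x = y).card
        = ((univ \ B).erase b).card.descFactorial ((A.erase a).card - 1) := by
      intro y hy
      rw [Finset.filter_filter]
      have heq2 : (univ.filter fun f : α → α =>
          ((∀ z ∉ insert a A, f z = z) ∧ Set.InjOn f ↑(insert a A) ∧ f a = b ∧
            f x ∈ B ∧ ∀ z ∈ (A.erase a).erase x, f z ∈ (univ \ B).erase b) ∧ f x = y)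
          = univ.filter fun f : α → α =>
            (∀ z ∉ insert a A, f z = z) ∧ Set.InjOn f ↑(insert a A) ∧ f a = b ∧
              f x = y ∧ ∀ z ∈ (A.erase a).erase x, f z ∈ (univ \ B).erase b := by
        ext f
        simp only [mem_filter, mem_univ, true_and]
        constructor
        · rintro ⟨⟨h1, h2, h3, h4, h5⟩, h6⟩
          exact ⟨h1, h2, h3, h6, h5⟩
        · rintro ⟨h1, h2, h3, h4, h5⟩
          exact ⟨⟨h1, h2, h3, by rw [h4]; exact hy, h5⟩, h4⟩
      rw [heq2, ← natCard_eq]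
      refine (two_pointN (insert a A) (A.erase a) a x b y ((univ \ B).erase b)
        (insert_eq_insert_erase' A a) (Finset.notMem_erase a A) hxm
        (fun h => hb (h ▸ hy)) (Finset.notMem_erase b _) (by simp [hy])).trans ?_
      rw [Finset.card_erase_of_mem hxm]
    rw [Finset.sum_congr rfl hyterm, Finset.sum_const, smul_eq_mul]
  rw [Finset.sum_congr rfl hterm, Finset.sum_const, smul_eq_mul]

-- case a ∉ A, b ∈ B
lemma scenario_out_in (A B : Finset α) (a b : α) (ha : a ∉ A) (hb : b ∈ B) :
    Nat.card {f : α → α // (∀ x ∉ insert a A, f x = x) ∧ Set.InjOn f ↑(insert a A) ∧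
        (A.filter fun x => f x ∈ B).card = 1 ∧ f a = b}
      = A.card * ((B.erase b).card * ((univ \ B).card.descFactorial (A.card - 1))) := by
  classical
  rw [natCard_eq]
  have hsplit : (univ.filter fun f : α → α => (∀ x ∉ insert a A, f x = x) ∧
      Set.InjOn f ↑(insert a A) ∧ (A.filter fun x => f x ∈ B).card = 1 ∧ f a = b)
      = A.biUnion (fun x => univ.filter fun f : α → α =>
          (∀ z ∉ insert a A, f z = z) ∧ Set.InjOn f ↑(insert a A) ∧ f a = b ∧
            f x ∈ B.erase b ∧ ∀ z ∈ A.erase x, f z ∈ univ \ B) := by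
    ext f
    simp only [mem_biUnion, mem_filter, mem_univ, true_and]
    constructor
    · rintro ⟨hsupp, hinj, hcard, hfa⟩
      obtain ⟨x₀, hx₀⟩ := Finset.card_eq_one.mp hcard
      have hx₀m : x₀ ∈ A.filter fun x => f x ∈ B := by
        rw [hx₀]; exact Finset.mem_singleton_self x₀
      rw [Finset.mem_filter] at hx₀m
      have hfx₀b : f x₀ ≠ b := by
        intro h
        have : x₀ = a := hinj (Finset.mem_coe.mpr (mem_insert_of_mem hx₀m.1))
          (Finset.mem_coe.mpr (mem_insert_self a A)) (by rw [h, hfa])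
        exact ha (this ▸ hx₀m.1)
      refine ⟨x₀, hx₀m.1, hsupp, hinj, hfa, Finset.mem_erase.mpr ⟨hfx₀b, hx₀m.2⟩,
        fun z hz => ?_⟩
      obtain ⟨hzx, hzA⟩ := Finset.mem_erase.mp hz
      rw [Finset.mem_sdiff]
      refine ⟨Finset.mem_univ _, fun hzB => ?_⟩
      have : z ∈ A.filter fun x => f x ∈ B := Finset.mem_filter.mpr ⟨hzA, hzB⟩
      rw [hx₀, Finset.mem_singleton] at this
      exact hzx this
    · rintro ⟨x, hxm, hsupp, hinj, hfa, hfxB, hz⟩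
      refine ⟨hsupp, hinj, ?_, hfa⟩
      have hfs : (A.filter fun z => f z ∈ B) = {x} := by
        ext z
        rw [Finset.mem_filter, Finset.mem_singleton]
        constructor
        · rintro ⟨hzA, hzB⟩
          by_contra hzx
          have := hz z (Finset.mem_erase.mpr ⟨hzx, hzA⟩)
          rw [Finset.mem_sdiff] at this
          exact this.2 hzB
        · rintro rfl
          exact ⟨hxm, Finset.mem_of_mem_erase hfxB⟩
      rw [hfs, Finset.card_singleton]
  rw [hsplit, Finset.card_biUnion ?disj2]
  case disj2 =>
    intro x hxm x' hx'm hne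
    simp only [Function.onFun]
    rw [Finset.disjoint_left]
    intro f hf hf'
    rw [mem_filter] at hf hf'
    have h1 : f x ∈ B := Finset.mem_of_mem_erase hf.2.2.2.2.1
    have h2 := hf'.2.2.2.2.2 x (Finset.mem_erase.mpr ⟨hne, hxm⟩)
    rw [Finset.mem_sdiff] at h2
    exact h2.2 h1
  have hterm : ∀ x ∈ A,
      (univ.filter fun f : α → α =>
        (∀ z ∉ insert a A, f z = z) ∧ Set.InjOn f ↑(insert a A) ∧ f a = b ∧
          f x ∈ B.erase b ∧ ∀ z ∈ A.erase x, f z ∈ univ \ B).card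
      = (B.erase b).card * ((univ \ B).card.descFactorial (A.card - 1)) := by
    intro x hxm
    have key := Finset.card_eq_sum_card_fiberwise
      (s := univ.filter fun f : α → α =>
        (∀ z ∉ insert a A, f z = z) ∧ Set.InjOn f ↑(insert a A) ∧ f a = b ∧
          f x ∈ B.erase b ∧ ∀ z ∈ A.erase x, f z ∈ univ \ B)
      (t := B.erase b) (f := fun f => f x) (fun f hf => (mem_filter.mp hf).2.2.2.2.1)
    rw [key]
    have hyterm : ∀ y ∈ B.erase b,
        ((univ.filter fun f : α → α =>
          (∀ z ∉ insert a A, f z = z) ∧ Set.InjOn f ↑(insert a A) ∧ f a = b ∧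
            f x ∈ B.erase b ∧ ∀ z ∈ A.erase x, f z ∈ univ \ B).filter
          fun f => f x = y).card
        = (univ \ B).card.descFactorial (A.card - 1) := by
      intro y hy
      rw [Finset.filter_filter]
      have heq2 : (univ.filter fun f : α → α =>
          ((∀ z ∉ insert a A, f z = z) ∧ Set.InjOn f ↑(insert a A) ∧ f a = b ∧
            f x ∈ B.erase b ∧ ∀ z ∈ A.erase x, f z ∈ univ \ B) ∧ f x = y)
          = univ.filter fun f : α → α =>
            (∀ z ∉ insert a A, f z = z) ∧ Set.InjOn f ↑(insert a A) ∧ f a = b ∧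
              f x = y ∧ ∀ z ∈ A.erase x, f z ∈ univ \ B := by
        ext f
        simp only [mem_filter, mem_univ, true_and]
        constructor
        · rintro ⟨⟨h1, h2, h3, h4, h5⟩, h6⟩
          exact ⟨h1, h2, h3, h6, h5⟩
        · rintro ⟨h1, h2, h3, h4, h5⟩
          exact ⟨⟨h1, h2, h3, by rw [h4]; exact hy, h5⟩, h4⟩
      rw [heq2, ← natCard_eq]
      refine (two_pointN (insert a A) A a x b y (univ \ B)
        rfl ha hxm (fun h => (Finset.mem_erase.mp hy).1 h.symm)
        (by simp [hb]) (by simp [Finset.mem_of_mem_erase hy])).trans ?_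
      rw [Finset.card_erase_of_mem hxm]
    rw [Finset.sum_congr rfl hyterm, Finset.sum_const, smul_eq_mul]
  rw [Finset.sum_congr rfl hterm, Finset.sum_const, smul_eq_mul]

-- N(b) in terms of function counts
lemma NB (A B : Finset α) (a b : α) :
    Nat.card {σ : Equiv.Perm α // (A.image ⇑σ ∩ B).card = 1 ∧ σ a = b}
      = Nat.card {f : α → α // (∀ x ∉ insert a A, f x = x) ∧ Set.InjOn f ↑(insert a A) ∧
          (A.filter fun x => f x ∈ B).card = 1 ∧ f a = b}
        * Nat.factorial (Fintype.card α - (insert a A).card) := by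
  classical
  have himg : ∀ f : α → α, Set.InjOn f ↑(insert a A) →
      (A.image f ∩ B).card = (A.filter fun x => f x ∈ B).card := by
    intro f hinj
    have hset : A.image f ∩ B = (A.filter fun x => f x ∈ B).image f := by
      ext y
      simp only [Finset.mem_inter, Finset.mem_image, Finset.mem_filter]
      constructor
      · rintro ⟨⟨x, hx, rfl⟩, hyB⟩
        exact ⟨x, ⟨hx, hyB⟩, rfl⟩
      · rintro ⟨x, ⟨hx, hB⟩, rfl⟩
        exact ⟨⟨x, hx, rfl⟩, hB⟩
    rw [hset, Finset.card_image_of_injOn (hinj.mono ?_)]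
    intro x hx
    simp only [Finset.coe_filter, Set.mem_setOf_eq] at hx
    exact Finset.mem_coe.mpr (Finset.mem_insert_of_mem hx.1)
  refine (perm_count (insert a A) (fun f => (A.image f ∩ B).card = 1 ∧ f a = b)
    (fun f g hag h => ?_)).trans ?_
  · have hi : A.image f = A.image g :=
      Finset.image_congr (fun x hx => hag x (Finset.mem_insert_of_mem hx))
    exact ⟨by rw [← hi]; exact h.1, by rw [← hag a (Finset.mem_insert_self a A)]; exact h.2⟩
  · congr 1
    apply Nat.card_congr
    apply Equiv.subtypeEquivRight
    intro f
    constructor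
    · rintro ⟨h1, h2, h3, h4⟩
      exact ⟨h1, h2, by rw [← himg f h2]; exact h3, h4⟩
    · rintro ⟨h1, h2, h3, h4⟩
      exact ⟨h1, h2, by rw [himg f h2]; exact h3, h4⟩

-- swap bijection: b, b' on the same side of B
lemma swap_count (A B : Finset α) (a b b' : α) (hbb : b ∈ B ↔ b' ∈ B) :
    Nat.card {σ : Equiv.Perm α // (A.image ⇑σ ∩ B).card = 1 ∧ σ a = b}
      = Nat.card {σ : Equiv.Perm α // (A.image ⇑σ ∩ B).card = 1 ∧ σ a = b'} := by
  classical
  have hτ : ∀ x : α, Equiv.swap b b' x ∈ B ↔ x ∈ B := by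
    intro x
    rcases eq_or_ne x b with rfl | hxb
    · rw [Equiv.swap_apply_left]; exact hbb.symm
    rcases eq_or_ne x b' with rfl | hxb'
    · rw [Equiv.swap_apply_right]; exact hbb
    · rw [Equiv.swap_apply_of_ne_of_ne hxb hxb']
  have hcard : ∀ σ : Equiv.Perm α,
      (A.image ⇑(Equiv.swap b b' * σ) ∩ B).card = (A.image ⇑σ ∩ B).card := by
    intro σ
    have hset : A.image ⇑(Equiv.swap b b' * σ) ∩ B
        = (A.image ⇑σ ∩ B).image (Equiv.swap b b') := by
      ext y
      simp only [Finset.mem_inter, Finset.mem_image, Equiv.Perm.coe_mul,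
        Function.comp_apply]
      constructor
      · rintro ⟨⟨x, hx, rfl⟩, hyB⟩
        exact ⟨σ x, ⟨⟨x, hx, rfl⟩, (hτ (σ x)).mp hyB⟩, rfl⟩
      · rintro ⟨z, ⟨⟨x, hx, rfl⟩, hzB⟩, rfl⟩
        exact ⟨⟨x, hx, rfl⟩, (hτ (σ x)).mpr hzB⟩
    rw [hset, Finset.card_image_of_injective _ (Equiv.injective _)]
  refine Nat.card_congr ⟨fun σp => ⟨Equiv.swap b b' * σp.1, ?_, ?_⟩,
    fun σp => ⟨Equiv.swap b b' * σp.1, ?_, ?_⟩, fun σp => ?_, fun σp => ?_⟩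
  · rw [hcard]; exact σp.2.1
  · show Equiv.swap b b' (σp.1 a) = b'
    rw [σp.2.2, Equiv.swap_apply_left]
  · rw [hcard]; exact σp.2.1
  · show Equiv.swap b b' (σp.1 a) = b
    rw [σp.2.2, Equiv.swap_apply_right]
  · apply Subtype.ext
    show Equiv.swap b b' * (Equiv.swap b b' * σp.1) = σp.1
    rw [← mul_assoc, Equiv.swap_mul_self, one_mul]
  · apply Subtype.ext
    show Equiv.swap b b' * (Equiv.swap b b' * σp.1) = σp.1
    rw [← mul_assoc, Equiv.swap_mul_self, one_mul]

-- arithmetic lemmas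
lemma arithE1 (k m : ℕ) (h2 : 2 ≤ k) (hm : m = k ^ 2) :
    (m - k).descFactorial (k - 1)
      = (k - 1) * (k * ((m - k - 1).descFactorial (k - 1 - 1))) := by
  obtain ⟨j, rfl⟩ : ∃ j, k = j + 2 := ⟨k - 2, by omega⟩
  have hsq : (j + 2) ^ 2 = (j + 1) * (j + 2) + (j + 2) := by ring
  have h1 : m - (j + 2) = (j + 1) * (j + 2) := by omega
  have hone : 1 ≤ (j + 1) * (j + 2) := Nat.one_le_iff_ne_zero.mpr (by positivity)
  have hs : m - (j + 2) - 1 + 1 = m - (j + 2) := by omega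
  have e1 : (m - (j + 2)).descFactorial (j + 1)
      = (m - (j + 2)) * (m - (j + 2) - 1).descFactorial j := by
    conv_lhs => rw [← hs]
    rw [Nat.succ_descFactorial_succ, hs]
  have h4 : j + 2 - 1 = j + 1 := by omega
  have h5 : j + 1 - 1 = j := by omega
  rw [h4, h5, e1]
  generalize (m - (j + 2) - 1).descFactorial j = d
  rw [h1]
  ring

lemma arithE2 (k m : ℕ) (h2 : 2 ≤ k) (hm : m = k ^ 2) :
    k * ((k - 1) * ((m - k).descFactorial (k - 1)))
      = k * (k * ((m - k - 1).descFactorial (k - 1))) := by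
  obtain ⟨j, rfl⟩ : ∃ j, k = j + 2 := ⟨k - 2, by omega⟩
  have hsq : (j + 2) ^ 2 = (j + 1) * (j + 2) + (j + 2) := by ring
  have h1 : m - (j + 2) = (j + 1) * (j + 2) := by omega
  have hone : 1 ≤ (j + 1) * (j + 2) := Nat.one_le_iff_ne_zero.mpr (by positivity)
  have hs : m - (j + 2) - 1 + 1 = m - (j + 2) := by omega
  have e1 : (m - (j + 2)).descFactorial (j + 1)
      = (m - (j + 2)) * (m - (j + 2) - 1).descFactorial j := by
    conv_lhs => rw [← hs]
    rw [Nat.succ_descFactorial_succ, hs]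
  have e2 : (m - (j + 2) - 1).descFactorial (j + 1)
      = (m - (j + 2) - 1 - j) * (m - (j + 2) - 1).descFactorial j :=
    Nat.descFactorial_succ _ _
  have h4 : j + 2 - 1 = j + 1 := by omega
  rw [h4, e1, e2]
  generalize (m - (j + 2) - 1).descFactorial j = d
  have hh : (j + 1) * (j + 2) = (j + 1) * (j + 1) + (j + 1) := by ring
  have c2 : m - (j + 2) - 1 - j = (j + 1) * (j + 1) := by omega
  rw [c2, h1]
  ring

lemma mixedN (A B : Finset α) (k : ℕ) (a b b' : α) (hA : A.card = k) (hB : B.card = k)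
    (hm : Fintype.card α = k ^ 2) (hb : b ∈ B) (hb' : b' ∉ B) :
    Nat.card {σ : Equiv.Perm α // (A.image ⇑σ ∩ B).card = 1 ∧ σ a = b}
      = Nat.card {σ : Equiv.Perm α // (A.image ⇑σ ∩ B).card = 1 ∧ σ a = b'} := by
  classical
  have hk1 : 1 ≤ k := by
    rw [← hB]
    exact Finset.card_pos.mpr ⟨b, hb⟩
  have hBuniv : B ≠ univ := fun h => hb' (h ▸ Finset.mem_univ b')
  have hkm : k < Fintype.card α := by
    rw [← hB, ← Finset.card_univ]
    exact Finset.card_lt_card (Finset.ssubset_univ_iff.mpr hBuniv)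
  have hk2 : 2 ≤ k := by
    have hkk : k < k * k := by
      rw [hm, pow_two] at hkm
      exact hkm
    by_contra h
    push_neg at h
    nlinarith
  have c1 : (univ \ B).card = Fintype.card α - k := by
    rw [Finset.card_univ_diff, hB]
  have c3 : ((univ \ B).erase b').card = Fintype.card α - k - 1 := by
    rw [Finset.card_erase_of_mem (by simp [hb']), c1]
  rw [NB, NB]
  congr 1
  by_cases ha : a ∈ A
  · rw [scenario_in_in A B a b ha hb, scenario_out A B a b' hb']
    have c2 : (A.erase a).card = k - 1 := by rw [Finset.card_erase_of_mem ha, hA]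
    rw [c1, c2, c3, hB]
    exact arithE1 k (Fintype.card α) hk2 hm
  · rw [scenario_out_in A B a b ha hb, scenario_out A B a b' hb']
    have c2 : A.erase a = A := Finset.erase_eq_of_notMem ha
    have c4 : (B.erase b).card = k - 1 := by rw [Finset.card_erase_of_mem hb, hB]
    rw [c2, c1, c3, c4, hA, hB]
    exact arithE2 k (Fintype.card α) hk2 hm

lemma NconstN (A B : Finset α) (k : ℕ) (a b b' : α) (hA : A.card = k) (hB : B.card = k)
    (hm : Fintype.card α = k ^ 2) :
    Nat.card {σ : Equiv.Perm α // (A.image ⇑σ ∩ B).card = 1 ∧ σ a = b}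
      = Nat.card {σ : Equiv.Perm α // (A.image ⇑σ ∩ B).card = 1 ∧ σ a = b'} := by
  by_cases hbb : (b ∈ B ↔ b' ∈ B)
  · exact swap_count A B a b b' hbb
  · by_cases hb : b ∈ B
    · have hb' : b' ∉ B := fun h => hbb ⟨fun _ => h, fun _ => hb⟩
      exact mixedN A B k a b b' hA hB hm hb hb'
    · have hb' : b' ∈ B := by
        by_contra h
        exact hbb ⟨fun hx => absurd hx hb, fun hx => absurd hx h⟩
      exact (mixedN A B k a b' b hA hB hm hb' hb).symm


end Panda

theorem panda_uniform_posterior (n k : ℕ) (A B : Finset (Fin n))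
    (hA : A.card = k) (hB : B.card = k) (hn : n = k ^ 2) (a b : Fin n) :
    n * (Finset.univ.filter (fun σ : Equiv.Perm (Fin n) =>
        (A.image (σ : Fin n → Fin n) ∩ B).card = 1 ∧ σ a = b)).card =
    (Finset.univ.filter (fun σ : Equiv.Perm (Fin n) =>
        (A.image (σ : Fin n → Fin n) ∩ B).card = 1)).card := by
  classical
  have hm : Fintype.card (Fin n) = k ^ 2 := by rw [Fintype.card_fin, hn]
  have key := Finset.card_eq_sum_card_fiberwise
    (s := univ.filter fun σ : Equiv.Perm (Fin n) => (A.image ⇑σ ∩ B).card = 1)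
    (t := (univ : Finset (Fin n))) (f := fun σ => σ a) (fun σ _ => Finset.mem_univ _)
  rw [key]
  have hterm : ∀ b' ∈ (univ : Finset (Fin n)),
      ((univ.filter fun σ : Equiv.Perm (Fin n) => (A.image ⇑σ ∩ B).card = 1).filter
        fun σ => σ a = b').card
      = (Finset.univ.filter (fun σ : Equiv.Perm (Fin n) =>
        (A.image (σ : Fin n → Fin n) ∩ B).card = 1 ∧ σ a = b)).card := by
    intro b' _
    have hL : (Finset.univ.filter (fun σ : Equiv.Perm (Fin n) =>
        (A.image (σ : Fin n → Fin n) ∩ B).card = 1 ∧ σ a = b)).card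
        = Nat.card {σ : Equiv.Perm (Fin n) //
            (A.image (σ : Fin n → Fin n) ∩ B).card = 1 ∧ σ a = b} :=
      (natCard_eq _).symm
    rw [Finset.filter_filter, ← natCard_eq, hL]
    exact NconstN A B k a b' b hA hB hm
  rw [Finset.sum_congr rfl hterm, Finset.sum_const, smul_eq_mul, Finset.card_univ,
    Fintype.card_fin]
end

section
/- (Theorem 2 for a queried pair; the paper's ratio ((n−1)!−x) / (n·((n−1)!−x)) = 1/n.) Suppose n = k^2, a ∈ A and b ∈ B. Then n times the number of admissible permutations σ with σ a = b equals the total number of admissible permutations; i.e., the probability that the queried encrypted value a corresponds to the queried cleartext value b, conditioned on admissibility, is exactly 1/n. -/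
open Finset Equiv

lemma swap_image_self' {n : ℕ} {s : Finset (Fin n)} {x y : Fin n}
    (hx : x ∈ s) (hy : y ∈ s) : s.image (Equiv.swap x y) = s := by
  apply Finset.eq_of_subset_of_card_le
  · intro z hz
    simp only [Finset.mem_image] at hz
    obtain ⟨w, hw, rfl⟩ := hz
    rcases eq_or_ne w x with rfl | hwx
    · simpa [Equiv.swap_apply_left] using hy
    rcases eq_or_ne w y with rfl | hwy
    · simpa [Equiv.swap_apply_right] using hx
    · rwa [Equiv.swap_apply_of_ne_of_ne hwx hwy]
  · rw [Finset.card_image_of_injective _ (Equiv.injective _)]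

theorem panda_queried_pair_posterior (n k : ℕ) (A B : Finset (Fin n))
    (hA : A.card = k) (hB : B.card = k) (hn : n = k ^ 2)
    (a b : Fin n) (ha : a ∈ A) (hb : b ∈ B) :
    n * (Finset.univ.filter (fun σ : Equiv.Perm (Fin n) =>
        (A.image (σ : Fin n → Fin n) ∩ B).card = 1 ∧ σ a = b)).card =
    (Finset.univ.filter (fun σ : Equiv.Perm (Fin n) =>
        (A.image (σ : Fin n → Fin n) ∩ B).card = 1)).card := by
  classical
  -- admissibility preserved under conjugating by swaps
  have hadm_pres : ∀ (p q : Fin n), p ∈ A → q ∈ B → ∀ σ : Equiv.Perm (Fin n),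
      (A.image ⇑(Equiv.swap q b * σ * Equiv.swap p a) ∩ B).card
        = (A.image ⇑σ ∩ B).card := by
    intro p q hp hq σ
    have h1 : A.image ⇑(Equiv.swap q b * σ * Equiv.swap p a)
        = (A.image ⇑σ).image (Equiv.swap q b) := by
      have : ⇑(Equiv.swap q b * σ * Equiv.swap p a)
          = (Equiv.swap q b) ∘ ⇑σ ∘ (Equiv.swap p a) := rfl
      rw [this, ← Finset.image_image, ← Finset.image_image,
        swap_image_self' hp ha]
    rw [h1]
    conv_lhs => rw [show B = B.image (Equiv.swap q b) from (swap_image_self' hq hb).symm]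
    rw [← Finset.image_inter _ _ (Equiv.injective _),
      Finset.card_image_of_injective _ (Equiv.injective _)]
  -- all blocks have the same cardinality
  have hblock : ∀ p ∈ A, ∀ q ∈ B,
      (Finset.univ.filter (fun σ : Equiv.Perm (Fin n) =>
        (A.image (σ : Fin n → Fin n) ∩ B).card = 1 ∧ σ p = q)).card =
      (Finset.univ.filter (fun σ : Equiv.Perm (Fin n) =>
        (A.image (σ : Fin n → Fin n) ∩ B).card = 1 ∧ σ a = b)).card := by
    intro p hp q hq
    apply Finset.card_bij' (fun σ _ => Equiv.swap q b * σ * Equiv.swap p a)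
      (fun σ _ => Equiv.swap q b * σ * Equiv.swap p a)
    · intro σ hσ
      simp only [Finset.mem_filter, Finset.mem_univ, true_and] at hσ ⊢
      refine ⟨by rw [hadm_pres p q hp hq σ]; exact hσ.1, ?_⟩
      have : (Equiv.swap p a) a = p := Equiv.swap_apply_right p a
      simp [Equiv.Perm.mul_apply, this, hσ.2]
    · intro σ hσ
      simp only [Finset.mem_filter, Finset.mem_univ, true_and] at hσ ⊢
      refine ⟨by rw [hadm_pres p q hp hq σ]; exact hσ.1, ?_⟩
      have : (Equiv.swap p a) p = a := Equiv.swap_apply_left p a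
      simp [Equiv.Perm.mul_apply, this, hσ.2]
    · intro σ _
      ext x
      simp [Equiv.Perm.mul_apply]
    · intro σ _
      ext x
      simp [Equiv.Perm.mul_apply]
  -- partition the admissible permutations by the unique pair
  have hcover : (Finset.univ.filter (fun σ : Equiv.Perm (Fin n) =>
        (A.image (σ : Fin n → Fin n) ∩ B).card = 1))
      = (A ×ˢ B).biUnion (fun pq =>
          Finset.univ.filter (fun σ : Equiv.Perm (Fin n) =>
            (A.image (σ : Fin n → Fin n) ∩ B).card = 1 ∧ σ pq.1 = pq.2)) := by
    ext σ
    simp only [Finset.mem_filter, Finset.mem_biUnion, Finset.mem_product,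
      Finset.mem_univ, true_and]
    constructor
    · intro h
      obtain ⟨y, hy⟩ := Finset.card_eq_one.mp h
      have hyy : y ∈ A.image ⇑σ ∩ B := by rw [hy]; exact Finset.mem_singleton_self y
      rw [Finset.mem_inter, Finset.mem_image] at hyy
      obtain ⟨⟨p, hp, hpy⟩, hyB⟩ := hyy
      exact ⟨(p, y), ⟨hp, hyB⟩, h, hpy⟩
    · rintro ⟨pq, _, h, _⟩; exact h
  have hdisj : ∀ pq ∈ A ×ˢ B, ∀ pq' ∈ A ×ˢ B, pq ≠ pq' →
      Disjoint (Finset.univ.filter (fun σ : Equiv.Perm (Fin n) =>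
            (A.image (σ : Fin n → Fin n) ∩ B).card = 1 ∧ σ pq.1 = pq.2))
        (Finset.univ.filter (fun σ : Equiv.Perm (Fin n) =>
            (A.image (σ : Fin n → Fin n) ∩ B).card = 1 ∧ σ pq'.1 = pq'.2)) := by
    rintro ⟨p, q⟩ hpq ⟨p', q'⟩ hpq' hne
    simp only [Finset.mem_product] at hpq hpq'
    rw [Finset.disjoint_left]
    intro σ h1 h2
    simp only [Finset.mem_filter, Finset.mem_univ, true_and] at h1 h2
    obtain ⟨hadm1, hσp⟩ := h1
    obtain ⟨-, hσp'⟩ := h2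
    obtain ⟨y, hy⟩ := Finset.card_eq_one.mp hadm1
    have hq1 : σ p ∈ A.image ⇑σ ∩ B :=
      Finset.mem_inter.mpr ⟨Finset.mem_image_of_mem _ hpq.1, hσp ▸ hpq.2⟩
    have hq2 : σ p' ∈ A.image ⇑σ ∩ B :=
      Finset.mem_inter.mpr ⟨Finset.mem_image_of_mem _ hpq'.1, hσp' ▸ hpq'.2⟩
    rw [hy, Finset.mem_singleton] at hq1 hq2
    apply hne
    have hpp : p = p' := σ.injective (hq1.trans hq2.symm)
    refine Prod.ext hpp ?_
    rw [← hσp, ← hσp', hpp]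
  rw [hcover, Finset.card_biUnion hdisj]
  rw [Finset.sum_congr rfl (fun pq hpq =>
    hblock pq.1 (Finset.mem_product.mp hpq).1 pq.2 (Finset.mem_product.mp hpq).2)]
  rw [Finset.sum_const, Finset.card_product, hA, hB, smul_eq_mul]
  exact congrFun (congrArg HMul.hMul (by rw [hn]; ring : n = k * k)) _
end

section
/- (Conditional probability 1/k² for arbitrary n.) For any n and k, if a ∈ A and b ∈ B, then k^2 times the number of admissible permutations σ with σ a = b equals the total number of admissible permutations. (When n = k^2 this specializes to the 1/n probability of Theorem 2.) -/
lemma swap_image_eq {n : ℕ} {A : Finset (Fin n)} {a a' : Fin n}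
    (ha : a ∈ A) (ha' : a' ∈ A) :
    A.image (Equiv.swap a a' : Fin n → Fin n) = A := by
  refine Finset.eq_of_subset_of_card_le ?_ ?_
  · intro x hx
    simp only [Finset.mem_image] at hx
    obtain ⟨y, hy, rfl⟩ := hx
    rcases eq_or_ne y a with rfl | h1
    · simpa [Equiv.swap_apply_left] using ha'
    rcases eq_or_ne y a' with rfl | h2
    · simpa [Equiv.swap_apply_right] using ha
    · rwa [Equiv.swap_apply_of_ne_of_ne h1 h2]
  · rw [Finset.card_image_of_injective _ (Equiv.injective _)]

lemma panda_helper {n : ℕ} {A B : Finset (Fin n)} {a a' b b' : Fin n}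
    (ha : a ∈ A) (ha' : a' ∈ A) (hb : b ∈ B) (hb' : b' ∈ B)
    {σ : Equiv.Perm (Fin n)}
    (h1 : (A.image (σ : Fin n → Fin n) ∩ B).card = 1) (h2 : σ a = b) :
    (A.image ((Equiv.swap b b' * σ * Equiv.swap a a' : Equiv.Perm (Fin n)) :
        Fin n → Fin n) ∩ B).card = 1 ∧
    (Equiv.swap b b' * σ * Equiv.swap a a') a' = b' := by
  constructor
  · have him : A.image ((Equiv.swap b b' * σ * Equiv.swap a a' : Equiv.Perm (Fin n)) :
        Fin n → Fin n)
        = (A.image (σ : Fin n → Fin n)).image (Equiv.swap b b' : Fin n → Fin n) := by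
      conv_rhs => rw [← swap_image_eq ha ha']
      rw [Finset.image_image, Finset.image_image]
      rfl
    rw [him]
    conv_lhs => rw [← swap_image_eq hb hb']
    rw [← Finset.image_inter _ _ (Equiv.injective _),
      Finset.card_image_of_injective _ (Equiv.injective _)]
    exact h1
  · simp [Equiv.Perm.mul_apply, Equiv.swap_apply_right, h2]

lemma panda_count_eq {n : ℕ} {A B : Finset (Fin n)} {a a' b b' : Fin n}
    (ha : a ∈ A) (ha' : a' ∈ A) (hb : b ∈ B) (hb' : b' ∈ B) :
    (Finset.univ.filter (fun σ : Equiv.Perm (Fin n) =>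
        (A.image (σ : Fin n → Fin n) ∩ B).card = 1 ∧ σ a = b)).card =
    (Finset.univ.filter (fun σ : Equiv.Perm (Fin n) =>
        (A.image (σ : Fin n → Fin n) ∩ B).card = 1 ∧ σ a' = b')).card := by
  apply Finset.card_bij (fun σ _ => Equiv.swap b b' * σ * Equiv.swap a a')
  · intro σ hσ
    simp only [Finset.mem_filter, Finset.mem_univ, true_and] at hσ ⊢
    exact panda_helper ha ha' hb hb' hσ.1 hσ.2
  · intro σ₁ h₁ σ₂ h₂ h
    exact mul_left_cancel (mul_right_cancel h)
  · intro τ hτ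
    simp only [Finset.mem_filter, Finset.mem_univ, true_and] at hτ
    refine ⟨Equiv.swap b b' * τ * Equiv.swap a a', ?_, ?_⟩
    · simp only [Finset.mem_filter, Finset.mem_univ, true_and]
      have := panda_helper ha' ha hb' hb hτ.1 hτ.2
      rwa [Equiv.swap_comm b' b, Equiv.swap_comm a' a] at this
    · rw [← mul_assoc, ← mul_assoc, Equiv.swap_mul_self, one_mul, mul_assoc,
        Equiv.swap_mul_self, mul_one]

theorem panda_conditional_prob_k_sq (n k : ℕ) (A B : Finset (Fin n))
    (hA : A.card = k) (hB : B.card = k)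
    (a b : Fin n) (ha : a ∈ A) (hb : b ∈ B) :
    k ^ 2 * (Finset.univ.filter (fun σ : Equiv.Perm (Fin n) =>
        (A.image (σ : Fin n → Fin n) ∩ B).card = 1 ∧ σ a = b)).card =
    (Finset.univ.filter (fun σ : Equiv.Perm (Fin n) =>
        (A.image (σ : Fin n → Fin n) ∩ B).card = 1)).card := by
  classical
  set f : Fin n × Fin n → Finset (Equiv.Perm (Fin n)) := fun p =>
    Finset.univ.filter (fun σ : Equiv.Perm (Fin n) =>
      (A.image (σ : Fin n → Fin n) ∩ B).card = 1 ∧ σ p.1 = p.2) with hf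
  have hcover : (Finset.univ.filter (fun σ : Equiv.Perm (Fin n) =>
      (A.image (σ : Fin n → Fin n) ∩ B).card = 1)) = (A ×ˢ B).biUnion f := by
    ext σ
    simp only [hf, Finset.mem_filter, Finset.mem_univ, true_and, Finset.mem_biUnion,
      Finset.mem_product]
    constructor
    · intro h
      obtain ⟨x, hx⟩ := Finset.card_eq_one.mp h
      have hxmem : x ∈ A.image (σ : Fin n → Fin n) ∩ B := by
        rw [hx]; exact Finset.mem_singleton_self x
      rw [Finset.mem_inter, Finset.mem_image] at hxmem
      obtain ⟨⟨a0, ha0, rfl⟩, hxB⟩ := hxmem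
      exact ⟨(a0, σ a0), ⟨ha0, hxB⟩, h, rfl⟩
    · rintro ⟨p, _, h, _⟩
      exact h
  have hdisj : ∀ p ∈ A ×ˢ B, ∀ q ∈ A ×ˢ B, p ≠ q → Disjoint (f p) (f q) := by
    intro p hp q hq hpq
    rw [Finset.disjoint_left]
    simp only [hf, Finset.mem_filter, Finset.mem_univ, true_and]
    rintro σ ⟨h1, h2⟩ ⟨_, h3⟩
    obtain ⟨x, hx⟩ := Finset.card_eq_one.mp h1
    obtain ⟨hpA, hpB⟩ := Finset.mem_product.mp hp
    obtain ⟨hqA, hqB⟩ := Finset.mem_product.mp hq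
    have hm1 : σ p.1 ∈ A.image (σ : Fin n → Fin n) ∩ B := by
      rw [Finset.mem_inter]
      exact ⟨Finset.mem_image_of_mem _ hpA, h2 ▸ hpB⟩
    have hm2 : σ q.1 ∈ A.image (σ : Fin n → Fin n) ∩ B := by
      rw [Finset.mem_inter]
      exact ⟨Finset.mem_image_of_mem _ hqA, h3 ▸ hqB⟩
    rw [hx, Finset.mem_singleton] at hm1 hm2
    have h14 : p.1 = q.1 := σ.injective (hm1.trans hm2.symm)
    exact hpq (Prod.ext h14 (by rw [← h2, ← h3, h14]))
  rw [hcover, Finset.card_biUnion hdisj]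
  have hsum : ∀ p ∈ A ×ˢ B, (f p).card = (f (a, b)).card := by
    intro p hp
    obtain ⟨hpA, hpB⟩ := Finset.mem_product.mp hp
    exact panda_count_eq hpA ha hpB hb
  rw [Finset.sum_congr rfl hsum, Finset.sum_const, smul_eq_mul, Finset.card_product,
    hA, hB, ← sq]
end

section
/- (Exact count with a fixed matched queried pair; the paper's count (n−1)!−x of allocations assuming a queried cleartext value is the plaintext of a queried encrypted value.) If a ∈ A and b ∈ B, then the number of admissible permutations σ with σ a = b equals Nat.descFactorial (n − k) (k − 1) * Nat.factorial (n − k). -/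
open Finset

variable {n : ℕ}

lemma card_fix (M : Finset (Fin n)) :
    (Finset.univ.filter (fun τ : Equiv.Perm (Fin n) => ∀ y ∈ M, τ y = y)).card
      = Nat.factorial (n - M.card) := by
  classical
  have h1 : (Finset.univ.filter (fun τ : Equiv.Perm (Fin n) => ∀ y ∈ M, τ y = y)).card
      = Fintype.card {τ : Equiv.Perm (Fin n) // ∀ y, ¬ (y ∉ M) → τ y = y} := by
    rw [Fintype.card_subtype]
    apply congrArg
    apply Finset.filter_congr
    intro τ _
    simp [not_not]
  rw [h1, ← Fintype.card_congr (Equiv.Perm.subtypeEquivSubtypePerm (fun y : Fin n => y ∉ M)),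
    Fintype.card_perm, Fintype.card_subtype]
  congr 1
  have : (Finset.univ.filter (fun y : Fin n => y ∉ M)) = Mᶜ := by
    ext y; simp
  rw [this, Finset.card_compl, Fintype.card_fin]

lemma card_ext (A : Finset (Fin n)) (g : {x // x ∈ A} → Fin n) (hg : Function.Injective g) :
    (Finset.univ.filter (fun σ : Equiv.Perm (Fin n) => ∀ x : {x // x ∈ A}, σ x = g x)).card
      = Nat.factorial (n - A.card) := by
  classical
  -- extension of g to a permutation
  obtain ⟨σ₀, hσ₀⟩ : ∃ σ₀ : Equiv.Perm (Fin n), ∀ x : {x // x ∈ A}, σ₀ x = g x := by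
    refine ⟨Equiv.extendSubtype (Equiv.ofInjective g hg), fun x => ?_⟩
    have h2 := Equiv.extendSubtype_apply_of_mem (Equiv.ofInjective g hg) x.1 x.2
    have hx : (⟨(x : Fin n), x.2⟩ : {x // x ∈ A}) = x := rfl
    rw [h2, hx]
    rfl
  set M : Finset (Fin n) := Finset.univ.image g with hM
  have hMcard : M.card = A.card := by
    rw [hM, Finset.card_image_of_injective _ hg, Finset.card_univ, Fintype.card_coe]
  have key : (Finset.univ.filter (fun σ : Equiv.Perm (Fin n) => ∀ x : {x // x ∈ A}, σ x = g x)).card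
      = (Finset.univ.filter (fun τ : Equiv.Perm (Fin n) => ∀ y ∈ M, τ y = y)).card := by
    apply Finset.card_bij (fun σ _ => σ * σ₀⁻¹)
    · intro σ hσ
      simp only [Finset.mem_filter, Finset.mem_univ, true_and] at hσ ⊢
      intro y hy
      rw [hM, Finset.mem_image] at hy
      obtain ⟨x, -, rfl⟩ := hy
      have : σ₀⁻¹ (g x) = (x : Fin n) := by
        rw [← hσ₀ x]; exact σ₀.symm_apply_apply _
      simp [Equiv.Perm.mul_apply, this, hσ x]
    · intro σ₁ h₁ σ₂ h₂ h
      exact mul_right_cancel h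
    · intro τ hτ
      simp only [Finset.mem_filter, Finset.mem_univ, true_and] at hτ
      refine ⟨τ * σ₀, ?_, by group⟩
      simp only [Finset.mem_filter, Finset.mem_univ, true_and]
      intro x
      have hgx : g x ∈ M := by rw [hM]; exact Finset.mem_image_of_mem _ (Finset.mem_univ x)
      simp [Equiv.Perm.mul_apply, hσ₀ x, hτ _ hgx]
  rw [key, card_fix, hMcard]

lemma card_inj_into {α : Type*} [Fintype α] [DecidableEq α] (C : Finset (Fin n)) :
    (Finset.univ.filter (fun f : α → Fin n => Function.Injective f ∧ ∀ x, f x ∈ C)).card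
      = Nat.descFactorial C.card (Fintype.card α) := by
  classical
  have h1 : (Finset.univ.filter (fun f : α → Fin n => Function.Injective f ∧ ∀ x, f x ∈ C)).card
      = Fintype.card {f : α → Fin n // Function.Injective f ∧ ∀ x, f x ∈ C} := by
    rw [Fintype.card_subtype]
  rw [h1]
  have e : {f : α → Fin n // Function.Injective f ∧ ∀ x, f x ∈ C} ≃ (α ↪ {y // y ∈ C}) :=
    { toFun := fun f => ⟨fun x => ⟨f.1 x, f.2.2 x⟩,
        fun x y h => f.2.1 (congrArg Subtype.val h)⟩
      invFun := fun e => ⟨fun x => (e x : Fin n),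
        ⟨fun x y h => e.injective (Subtype.ext h), fun x => (e x).2⟩⟩
      left_inv := fun f => rfl
      right_inv := fun e => rfl }
  rw [Fintype.card_congr e, Fintype.card_embedding_eq, Fintype.card_coe]

theorem panda_matched_pair_count (n k : ℕ) (A B : Finset (Fin n))
    (hA : A.card = k) (hB : B.card = k)
    (a b : Fin n) (ha : a ∈ A) (hb : b ∈ B) :
    (Finset.univ.filter (fun σ : Equiv.Perm (Fin n) =>
        (A.image (σ : Fin n → Fin n) ∩ B).card = 1 ∧ σ a = b)).card =
    Nat.descFactorial (n - k) (k - 1) * Nat.factorial (n - k) := by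
  classical
  have hcond : ∀ σ : Equiv.Perm (Fin n),
      ((A.image (σ : Fin n → Fin n) ∩ B).card = 1 ∧ σ a = b) ↔
      (σ a = b ∧ ∀ x ∈ A.erase a, σ x ∉ B) := by
    intro σ
    constructor
    · rintro ⟨h1, h2⟩
      refine ⟨h2, ?_⟩
      intro x hx hxB
      have hbmem : b ∈ A.image σ ∩ B :=
        Finset.mem_inter.2 ⟨Finset.mem_image.2 ⟨a, ha, h2⟩, hb⟩
      obtain ⟨c, hc⟩ := Finset.card_eq_one.1 h1
      rw [hc, Finset.mem_singleton] at hbmem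
      have hx' := Finset.mem_erase.1 hx
      have hσx : σ x ∈ A.image σ ∩ B :=
        Finset.mem_inter.2 ⟨Finset.mem_image_of_mem _ hx'.2, hxB⟩
      rw [hc, Finset.mem_singleton, ← hbmem] at hσx
      exact hx'.1 (σ.injective (hσx.trans h2.symm))
    · rintro ⟨h2, h1⟩
      refine ⟨?_, h2⟩
      rw [Finset.card_eq_one]
      refine ⟨b, ?_⟩
      ext y
      simp only [Finset.mem_inter, Finset.mem_image, Finset.mem_singleton]
      constructor
      · rintro ⟨⟨x, hxA, rfl⟩, hyB⟩
        by_contra hne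
        have hxa : x ≠ a := fun h => hne (by rw [h, h2])
        exact h1 x (Finset.mem_erase.2 ⟨hxa, hxA⟩) hyB
      · rintro rfl
        exact ⟨⟨a, ha, h2⟩, hb⟩
  have hS : (Finset.univ.filter (fun σ : Equiv.Perm (Fin n) =>
        (A.image (σ : Fin n → Fin n) ∩ B).card = 1 ∧ σ a = b)).card
      = (Finset.univ.filter (fun σ : Equiv.Perm (Fin n) =>
        σ a = b ∧ ∀ x ∈ A.erase a, σ x ∉ B)).card := by
    apply congrArg
    apply Finset.filter_congr
    intro σ _
    exact hcond σ
  rw [hS]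
  set G : Finset ({x // x ∈ A.erase a} → Fin n) :=
    Finset.univ.filter (fun g => Function.Injective g ∧ ∀ x, g x ∈ Bᶜ) with hG
  have hfib : (Finset.univ.filter (fun σ : Equiv.Perm (Fin n) =>
        σ a = b ∧ ∀ x ∈ A.erase a, σ x ∉ B)).card
      = ∑ g ∈ G, ((Finset.univ.filter (fun σ : Equiv.Perm (Fin n) =>
          σ a = b ∧ ∀ x ∈ A.erase a, σ x ∉ B)).filter
          (fun σ => (fun x : {x // x ∈ A.erase a} => σ x) = g)).card := by
    apply Finset.card_eq_sum_card_fiberwise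
    intro σ hσ
    simp only [Finset.mem_coe, Finset.mem_filter, Finset.mem_univ, true_and] at hσ
    rw [hG, Finset.mem_coe, Finset.mem_filter]
    refine ⟨Finset.mem_univ _, fun x y h => Subtype.ext (σ.injective h), fun x => ?_⟩
    rw [Finset.mem_compl]
    exact hσ.2 x x.2
  rw [hfib]
  have hfibcard : ∀ g ∈ G, ((Finset.univ.filter (fun σ : Equiv.Perm (Fin n) =>
          σ a = b ∧ ∀ x ∈ A.erase a, σ x ∉ B)).filter
          (fun σ => (fun x : {x // x ∈ A.erase a} => σ x) = g)).card
        = Nat.factorial (n - k) := by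
    intro g hg
    rw [hG, Finset.mem_filter] at hg
    obtain ⟨-, hginj, hgB⟩ := hg
    set g' : {x // x ∈ A} → Fin n := fun x =>
      if h : (x : Fin n) = a then b
      else g ⟨x, Finset.mem_erase.2 ⟨h, x.2⟩⟩ with hg'
    have hg'inj : Function.Injective g' := by
      intro x y h
      simp only [hg'] at h
      by_cases hx : (x : Fin n) = a <;> by_cases hy : (y : Fin n) = a
      · exact Subtype.ext (hx.trans hy.symm)
      · rw [dif_pos hx, dif_neg hy] at h
        exact absurd hb (by rw [h]; exact Finset.mem_compl.1 (hgB _))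
      · rw [dif_neg hx, dif_pos hy] at h
        exact absurd hb (by rw [← h]; exact Finset.mem_compl.1 (hgB _))
      · rw [dif_neg hx, dif_neg hy] at h
        have h2 : (x : Fin n) = y := congrArg (Subtype.val : {z // z ∈ A.erase a} → Fin n) (hginj h)
        exact Subtype.ext h2
    have heq : ((Finset.univ.filter (fun σ : Equiv.Perm (Fin n) =>
          σ a = b ∧ ∀ x ∈ A.erase a, σ x ∉ B)).filter
          (fun σ => (fun x : {x // x ∈ A.erase a} => σ x) = g))
        = Finset.univ.filter (fun σ : Equiv.Perm (Fin n) =>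
            ∀ x : {x // x ∈ A}, σ x = g' x) := by
      ext σ
      simp only [Finset.mem_filter, Finset.mem_univ, true_and]
      constructor
      · rintro ⟨⟨hab, -⟩, hrestr⟩
        intro x
        simp only [hg']
        by_cases hx : (x : Fin n) = a
        · rw [dif_pos hx, hx, hab]
        · rw [dif_neg hx]
          exact congrFun hrestr ⟨x, Finset.mem_erase.2 ⟨hx, x.2⟩⟩
      · intro h
        have hab : σ a = b := by
          simpa [hg'] using h ⟨a, ha⟩
        refine ⟨⟨hab, fun x hx hxB => ?_⟩, ?_⟩
        · have hx' := Finset.mem_erase.1 hx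
          have := h ⟨x, hx'.2⟩
          simp only [hg'] at this
          rw [dif_neg hx'.1] at this
          exact Finset.mem_compl.1 (hgB _) (this ▸ hxB)
        · funext x
          have hxne : (x : Fin n) ≠ a := (Finset.mem_erase.1 x.2).1
          have := h ⟨x, Finset.mem_of_mem_erase x.2⟩
          simp only [hg'] at this
          rw [dif_neg hxne] at this
          rw [this]
    rw [heq, card_ext A g' hg'inj, hA]
  rw [Finset.sum_congr rfl hfibcard, Finset.sum_const, smul_eq_mul]
  have hGcard : G.card = Nat.descFactorial (n - k) (k - 1) := by
    rw [hG, card_inj_into, Finset.card_compl, Fintype.card_fin, hB, Fintype.card_coe,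
      Finset.card_erase_of_mem ha, hA]
  rw [hGcard]
end

section
/- (Exact count when a queried encrypted value maps to an unqueried cleartext value.) If a ∈ A and b ∉ B, then the number of admissible permutations σ with σ a = b equals k * (k − 1) * Nat.descFactorial (n − k − 1) (k − 2) * Nat.factorial (n − k). (Here subtraction is truncated natural subtraction; for k = 1 both sides are 0.) -/
open Finset

lemma count_injOn (n : ℕ) (s t : Finset (Fin n)) (g₀ : Fin n → Fin n) :
    (Finset.univ.filter fun g : Fin n → Fin n =>
      (∀ x, x ∉ s → g x = g₀ x) ∧ (∀ x ∈ s, ∀ y ∈ s, g x = g y → x = y) ∧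
      (∀ x ∈ s, g x ∈ t)).card = t.card.descFactorial s.card := by
  rw [← Fintype.card_coe s, ← Fintype.card_coe t, ← Fintype.card_embedding_eq,
    ← Finset.card_univ]
  refine Finset.card_bij'
    (fun g hg => ⟨fun x => ⟨g x, ?_⟩, ?_⟩)
    (fun e _ => fun x => if hx : x ∈ s then (e ⟨x, hx⟩ : Fin n) else g₀ x)
    (fun _ _ => Finset.mem_univ _) ?_ ?_ ?_
  · exact (Finset.mem_filter.mp hg).2.2.2 x x.2
  · intro x y hxy
    exact Subtype.ext ((Finset.mem_filter.mp hg).2.2.1 x x.2 y y.2 (by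
      simpa using congrArg Subtype.val hxy))
  · intro e _
    simp only [Finset.mem_filter, Finset.mem_univ, true_and]
    refine ⟨fun x hx => dif_neg hx, ?_, ?_⟩
    · intro x hx y hy hxy
      rw [dif_pos hx, dif_pos hy] at hxy
      simpa using congrArg Subtype.val (e.injective (Subtype.ext hxy))
    · intro x hx
      rw [dif_pos hx]
      exact (e ⟨x, hx⟩).2
  · intro g hg
    funext x
    by_cases hx : x ∈ s
    · simp [dif_pos hx]; rfl
    · simp [dif_neg hx, (Finset.mem_filter.mp hg).2.1 x hx]
  · intro e _
    ext x
    simp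

lemma count_perm_ext (n : ℕ) (s : Finset (Fin n)) (g : Fin n → Fin n)
    (hg : ∀ x ∈ s, ∀ y ∈ s, g x = g y → x = y) :
    (Finset.univ.filter fun σ : Equiv.Perm (Fin n) => ∀ x ∈ s, σ x = g x).card
      = (n - s.card).factorial := by
  classical
  have himg : (s.image g).card = s.card :=
    Finset.card_image_of_injOn (fun x hx y hy => hg x hx y hy)
  have hcompl : Fintype.card ((sᶜ : Finset (Fin n)) : Type) = n - s.card := by
    simp [Fintype.card_coe, Finset.card_compl]
  have hcards : ((sᶜ : Finset (Fin n))).card = (((s.image g)ᶜ : Finset (Fin n))).card := by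
    simp [Finset.card_compl, himg]
  have key : (Finset.univ.filter fun σ : Equiv.Perm (Fin n) => ∀ x ∈ s, σ x = g x).card
      = (Finset.univ : Finset (((sᶜ : Finset (Fin n)) : Type) ≃ (((s.image g)ᶜ : Finset (Fin n)) : Type))).card := by
    have hiff : ∀ (σ : Equiv.Perm (Fin n)), (∀ x ∈ s, σ x = g x) →
        ∀ x : Fin n, x ∈ sᶜ ↔ σ x ∈ (s.image g)ᶜ := by
      intro σ hσ x
      simp only [Finset.mem_compl, Finset.mem_image]
      constructor
      · rintro hx ⟨y, hy, hxy⟩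
        exact hx (by rwa [← hσ y hy, σ.injective.eq_iff] at hxy ▸ hy)
      · intro h hx
        exact h ⟨x, hx, (hσ x hx).symm⟩
    refine Finset.card_bij'
      (fun σ hσ => σ.subtypeEquiv (hiff σ (Finset.mem_filter.mp hσ).2))
      (fun e _ => ?_)
      (fun _ _ => Finset.mem_univ _) ?_ ?_ ?_
    · -- build the permutation from e
      refine Equiv.ofBijective (fun x => if hx : x ∈ s then g x else (e ⟨x, Finset.mem_compl.mpr hx⟩ : Fin n)) ?_
      rw [← Finite.injective_iff_bijective]
      intro x y hxy
      dsimp only at hxy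
      by_cases hx : x ∈ s <;> by_cases hy : y ∈ s
      · rw [dif_pos hx, dif_pos hy] at hxy; exact hg x hx y hy hxy
      · rw [dif_pos hx, dif_neg hy] at hxy
        have h2 := (e ⟨y, Finset.mem_compl.mpr hy⟩).2
        rw [Finset.mem_compl] at h2
        exact absurd (hxy ▸ Finset.mem_image_of_mem g hx) h2
      · rw [dif_neg hx, dif_pos hy] at hxy
        have h2 := (e ⟨x, Finset.mem_compl.mpr hx⟩).2
        rw [Finset.mem_compl] at h2
        exact absurd (hxy ▸ Finset.mem_image_of_mem g hy) h2
      · rw [dif_neg hx, dif_neg hy] at hxy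
        simpa using congrArg Subtype.val (e.injective (Subtype.ext hxy))
    · intro e _
      simp only [Finset.mem_filter, Finset.mem_univ, true_and]
      intro x hx
      simp [Equiv.ofBijective, dif_pos hx]
    · intro σ hσ
      ext x
      by_cases hx : x ∈ s
      · simp [Equiv.ofBijective, hx, (Finset.mem_filter.mp hσ).2 x hx]
      · simp [Equiv.ofBijective, hx]
    · intro e _
      ext x
      have hxs : (x : Fin n) ∉ s := Finset.mem_compl.mp x.2
      simp [Equiv.ofBijective, Equiv.subtypeEquiv, hxs]
  rw [key, Finset.card_univ,
    Fintype.card_equiv (Finset.equivOfCardEq hcards), hcompl]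

lemma inter_eq_imageP {n : ℕ} (A B : Finset (Fin n)) (g : Fin n → Fin n) :
    A.image g ∩ B = (A.filter fun x => g x ∈ B).image g := by
  ext y
  simp only [Finset.mem_inter, Finset.mem_image, Finset.mem_filter]
  constructor
  · rintro ⟨⟨x, hx, rfl⟩, hyB⟩
    exact ⟨x, ⟨hx, hyB⟩, rfl⟩
  · rintro ⟨x, ⟨hx, hgx⟩, rfl⟩
    exact ⟨⟨x, hx, rfl⟩, hgx⟩

def qfun {n : ℕ} (A B : Finset (Fin n)) (a : Fin n) (g : Fin n → Fin n) : Fin n × Fin n :=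
  if h : (A.filter fun x => g x ∈ B).Nonempty
  then ((A.filter fun x => g x ∈ B).min' h, g ((A.filter fun x => g x ∈ B).min' h))
  else (a, a)

lemma qfun_eq {n : ℕ} {A B : Finset (Fin n)} {a : Fin n} {g : Fin n → Fin n} {a' : Fin n}
    (h : A.filter (fun x => g x ∈ B) = {a'}) : qfun A B a g = (a', g a') := by
  rw [qfun, dif_pos (by rw [h]; exact ⟨a', Finset.mem_singleton_self a'⟩)]
  simp [h]

theorem panda_unqueried_target_count (n k : ℕ) (A B : Finset (Fin n))
    (hA : A.card = k) (hB : B.card = k)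
    (a b : Fin n) (ha : a ∈ A) (hb : b ∉ B) :
    (Finset.univ.filter (fun σ : Equiv.Perm (Fin n) =>
        (A.image (σ : Fin n → Fin n) ∩ B).card = 1 ∧ σ a = b)).card =
    k * (k - 1) * Nat.descFactorial (n - k - 1) (k - 2) * Nat.factorial (n - k) := by
  -- the set of "partial data": functions that are id off A, injective on A,
  -- send a to b, and exactly one element of A into B
  set T : Finset (Fin n → Fin n) := Finset.univ.filter (fun g : Fin n → Fin n =>
    (∀ x, x ∉ A → g x = x) ∧ (∀ x ∈ A, ∀ y ∈ A, g x = g y → x = y) ∧ g a = b ∧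
    (A.image g ∩ B).card = 1) with hT
  -- Step A : LHS = T.card * (n-k)!
  have stepA : (Finset.univ.filter (fun σ : Equiv.Perm (Fin n) =>
        (A.image (σ : Fin n → Fin n) ∩ B).card = 1 ∧ σ a = b)).card
      = T.card * (n - k).factorial := by
    have hmemT : ∀ σ : Equiv.Perm (Fin n),
        σ ∈ Finset.univ.filter (fun σ : Equiv.Perm (Fin n) =>
          (A.image (σ : Fin n → Fin n) ∩ B).card = 1 ∧ σ a = b) →
        (fun x => if x ∈ A then σ x else x) ∈ T := by
      intro σ hσ
      obtain ⟨hcard, hab⟩ := (Finset.mem_filter.mp hσ).2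
      have himg : A.image (fun x => if x ∈ A then σ x else x) = A.image σ :=
        Finset.image_congr (fun x hx => if_pos hx)
      refine Finset.mem_filter.mpr ⟨Finset.mem_univ _, fun x hx => if_neg hx, ?_, ?_, ?_⟩
      · intro x hx y hy hxy
        dsimp only at hxy
        rw [if_pos hx, if_pos hy] at hxy
        exact σ.injective hxy
      · show (if a ∈ A then σ a else a) = b
        rw [if_pos ha]; exact hab
      · rw [himg]; exact hcard
    rw [Finset.card_eq_sum_card_fiberwise hmemT]
    rw [Finset.sum_congr rfl (fun g hg => ?_), Finset.sum_const, smul_eq_mul]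
    obtain ⟨hoff, hinj, hga, hcard⟩ := (Finset.mem_filter.mp hg).2
    have hfib : (Finset.univ.filter (fun σ : Equiv.Perm (Fin n) =>
          (A.image (σ : Fin n → Fin n) ∩ B).card = 1 ∧ σ a = b)).filter
          (fun σ => (fun x => if x ∈ A then σ x else x) = g)
        = Finset.univ.filter (fun σ : Equiv.Perm (Fin n) => ∀ x ∈ A, σ x = g x) := by
      ext σ
      simp only [Finset.mem_filter, Finset.mem_univ, true_and]
      constructor
      · rintro ⟨-, hfg⟩
        intro x hx
        rw [← congrFun hfg x, if_pos hx]
      · intro hag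
        have himg : A.image (σ : Fin n → Fin n) = A.image g :=
          Finset.image_congr (fun x hx => hag x hx)
        refine ⟨⟨by rw [himg]; exact hcard, by rw [hag a ha]; exact hga⟩, ?_⟩
        funext x
        by_cases hx : x ∈ A
        · rw [if_pos hx]; exact hag x hx
        · rw [if_neg hx]; exact (hoff x hx).symm
    rw [hfib, count_perm_ext n A g hinj, hA]
  rw [stepA]
  -- Step B : T.card = (k-1) * k * descFactorial (n-k-1) (k-2)
  have hbne : ∀ b' ∈ B, b ≠ b' := fun b' hb' h => hb (h ▸ hb')
  have stepB : T.card = ((k - 1) * k) * Nat.descFactorial (n - k - 1) (k - 2) := by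
    have hmem2 : ∀ g ∈ T, qfun A B a g ∈ (A.erase a) ×ˢ B := by
      intro g hg
      obtain ⟨hoff, hinj, hga, hcard⟩ := (Finset.mem_filter.mp hg).2
      have hPcard : (A.filter fun x => g x ∈ B).card = 1 := by
        rw [inter_eq_imageP, Finset.card_image_of_injOn
          (fun x hx y hy => hinj x (Finset.mem_filter.mp hx).1 y (Finset.mem_filter.mp hy).1)]
          at hcard
        exact hcard
      obtain ⟨a', hP⟩ := Finset.card_eq_one.mp hPcard
      have ha'P : a' ∈ A.filter fun x => g x ∈ B := hP ▸ Finset.mem_singleton_self a'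
      obtain ⟨ha'A, ha'B⟩ := Finset.mem_filter.mp ha'P
      rw [qfun_eq hP]
      refine Finset.mem_product.mpr ⟨Finset.mem_erase.mpr ⟨?_, ha'A⟩, ha'B⟩
      rintro rfl
      rw [hga] at ha'B
      exact hb ha'B
    rw [Finset.card_eq_sum_card_fiberwise hmem2]
    rw [Finset.sum_congr rfl (fun p hp => ?_), Finset.sum_const, smul_eq_mul,
      Finset.card_product, Finset.card_erase_of_mem ha, hA, hB]
    obtain ⟨a', b'⟩ := p
    obtain ⟨ha'e, hb'B⟩ := Finset.mem_product.mp hp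
    obtain ⟨ha'ne, ha'A⟩ := Finset.mem_erase.mp ha'e
    have hbb' : b ≠ b' := hbne b' hb'B
    -- the fiber equals a count_injOn set
    have hfib : T.filter (fun g => qfun A B a g = (a', b'))
        = Finset.univ.filter (fun g : Fin n → Fin n =>
            (∀ x, x ∉ (A.erase a).erase a' → g x =
              (fun x => if x = a then b else if x = a' then b' else x) x) ∧
            (∀ x ∈ (A.erase a).erase a', ∀ y ∈ (A.erase a).erase a', g x = g y → x = y) ∧
            (∀ x ∈ (A.erase a).erase a', g x ∈ (insert b B)ᶜ)) := by
      ext g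
      simp only [Finset.mem_filter, Finset.mem_univ, true_and, hT]
      constructor
      · rintro ⟨⟨hoff, hinj, hga, hcard⟩, hq⟩
        have hPcard : (A.filter fun x => g x ∈ B).card = 1 := by
          rw [inter_eq_imageP, Finset.card_image_of_injOn
            (fun x hx y hy => hinj x (Finset.mem_filter.mp hx).1 y (Finset.mem_filter.mp hy).1)]
            at hcard
          exact hcard
        obtain ⟨c, hP⟩ := Finset.card_eq_one.mp hPcard
        rw [qfun_eq hP] at hq
        have hq1 : c = a' := congrArg Prod.fst hq
        have hga' : g c = b' := congrArg Prod.snd hq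
        rw [hq1] at hP hga'
        have hPmem : ∀ x, x ∈ A ∧ g x ∈ B ↔ x = a' := by
          intro x
          constructor
          · rintro ⟨h1, h2⟩
            have hx : x ∈ A.filter (fun x => g x ∈ B) := Finset.mem_filter.mpr ⟨h1, h2⟩
            rwa [hP, Finset.mem_singleton] at hx
          · intro hxeq
            have hx : a' ∈ A.filter (fun x => g x ∈ B) := by
              rw [hP]; exact Finset.mem_singleton_self a'
            rw [hxeq]
            exact Finset.mem_filter.mp hx
        refine ⟨?_, ?_, ?_⟩
        · intro x hx
          rw [Finset.mem_erase, Finset.mem_erase] at hx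
          push_neg at hx
          by_cases hxa : x = a
          · subst hxa; simp [hga]
          · by_cases hxa' : x = a'
            · subst hxa'; simp [hga', hxa]
            · have hxA : x ∉ A := hx hxa' hxa
              simp [hxa, hxa', hoff x hxA]
        · intro x hx y hy hxy
          exact hinj x (Finset.mem_erase.mp (Finset.mem_erase.mp hx).2).2
            y (Finset.mem_erase.mp (Finset.mem_erase.mp hy).2).2 hxy
        · intro x hx
          obtain ⟨hxa', hxa, hxA⟩ :
              x ≠ a' ∧ x ≠ a ∧ x ∈ A := by
            obtain ⟨h1, h2⟩ := Finset.mem_erase.mp hx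
            obtain ⟨h3, h4⟩ := Finset.mem_erase.mp h2
            exact ⟨h1, h3, h4⟩
          rw [Finset.mem_compl, Finset.mem_insert]
          push_neg
          constructor
          · intro hgx
            exact hxa (hinj x hxA a ha (hgx.trans hga.symm))
          · intro hgx
            exact hxa' ((hPmem x).mp ⟨hxA, hgx⟩)
      · rintro ⟨hoff, hinj, hmem⟩
        have hnot_s : ∀ x, x = a ∨ x = a' → x ∉ (A.erase a).erase a' := by
          rintro x (rfl | rfl)
          · intro hx
            exact (Finset.mem_erase.mp (Finset.mem_erase.mp hx).2).1 rfl
          · intro hx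
            exact (Finset.mem_erase.mp hx).1 rfl
        have hga : g a = b := by
          rw [hoff a (hnot_s a (Or.inl rfl))]
          simp
        have hga' : g a' = b' := by
          rw [hoff a' (hnot_s a' (Or.inr rfl))]
          simp [ha'ne]
        have hs_mem : ∀ x, x ∈ A → x ≠ a → x ≠ a' → x ∈ (A.erase a).erase a' := by
          intro x hxA hxa hxa'
          exact Finset.mem_erase.mpr ⟨hxa', Finset.mem_erase.mpr ⟨hxa, hxA⟩⟩
        have hval : ∀ x, x ∈ (A.erase a).erase a' → g x ∉ B ∧ g x ≠ b := by
          intro x hx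
          have := hmem x hx
          rw [Finset.mem_compl, Finset.mem_insert] at this
          push_neg at this
          exact ⟨this.2, this.1⟩
        have hoffA : ∀ x, x ∉ A → g x = x := by
          intro x hxA
          have hxa : x ≠ a := fun h => hxA (h ▸ ha)
          have hxa' : x ≠ a' := fun h => hxA (h ▸ ha'A)
          rw [hoff x (fun hx => hxA (Finset.mem_erase.mp (Finset.mem_erase.mp hx).2).2)]
          simp [hxa, hxa']
        have hinjA : ∀ x ∈ A, ∀ y ∈ A, g x = g y → x = y := by
          intro x hx y hy hxy
          by_cases hxa : x = a <;> by_cases hya : y = a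
          · rw [hxa, hya]
          · exfalso
            subst hxa
            by_cases hya' : y = a'
            · subst hya'; rw [hga, hga'] at hxy; exact hbb' hxy
            · exact (hval y (hs_mem y hy hya hya')).2 (hxy.symm.trans hga)
          · exfalso
            subst hya
            by_cases hxa' : x = a'
            · subst hxa'; rw [hga, hga'] at hxy; exact hbb' hxy.symm
            · exact (hval x (hs_mem x hx hxa hxa')).2 (hxy.trans hga)
          · by_cases hxa' : x = a' <;> by_cases hya' : y = a'
            · rw [hxa', hya']
            · exfalso
              subst hxa'
              exact (hval y (hs_mem y hy hya hya')).1 (by rw [← hxy, hga']; exact hb'B)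
            · exfalso
              subst hya'
              exact (hval x (hs_mem x hx hxa hxa')).1 (by rw [hxy, hga']; exact hb'B)
            · exact hinj x (hs_mem x hx hxa hxa') y (hs_mem y hy hya hya') hxy
        have hP : A.filter (fun x => g x ∈ B) = {a'} := by
          ext x
          rw [Finset.mem_filter, Finset.mem_singleton]
          constructor
          · rintro ⟨hxA, hgxB⟩
            by_contra hxa'
            have hxa : x ≠ a := by
              rintro rfl
              rw [hga] at hgxB
              exact hb hgxB
            exact (hval x (hs_mem x hxA hxa hxa')).1 hgxB
          · rintro rfl
            exact ⟨ha'A, by rw [hga']; exact hb'B⟩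
        have hcard : (A.image g ∩ B).card = 1 := by
          rw [inter_eq_imageP, hP]
          simp
        exact ⟨⟨hoffA, hinjA, hga, hcard⟩, by rw [qfun_eq hP, hga']⟩
    rw [hfib, count_injOn]
    have ht : ((insert b B)ᶜ : Finset (Fin n)).card = n - k - 1 := by
      rw [Finset.card_compl, Finset.card_insert_of_notMem hb, hB, Fintype.card_fin,
        Nat.sub_sub]
    have hs : ((A.erase a).erase a').card = k - 2 := by
      rw [Finset.card_erase_of_mem (Finset.mem_erase.mpr ⟨ha'ne, ha'A⟩),
        Finset.card_erase_of_mem ha, hA, Nat.sub_sub]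
    rw [ht, hs]
  rw [stepB]
  ring
end
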